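/- arXiv:2102.02616 — 3 statements merged into one kernel-verified Lean document; each statement's English description precedes it below -/
import Mathlib

section
/- Let ψ : ℝ → ℝ be twice continuously differentiable with ψ(s) ≥ −Λ and ψ''(s) ≥ −Λ for all s ∈ ℝ for some constant Λ ≥ 0, and suppose ψ''(t) → +∞ as t → +∞ and as t → −∞. Then there exists a sequence of twice continuously differentiable functions f_n : ℝ → ℝ and constants C_n ≥ 0 such that: (i) f_n → ψ and f_n' → ψ' uniformly on every compact subset of ℝ; (ii) −Λ ≤ f_n(s) ≤ ψ(s) for all s ∈ ℝ; (iii) f_n''(s) ≥ −Λ for all s ∈ ℝ; and (iv) |f_n''(s)| ≤ C_n for all s ∈ ℝ. -/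
private lemma build_aux (ψ : ℝ → ℝ) (hψ : ContDiff ℝ 2 ψ) (Λ : ℝ) (hΛ : 0 ≤ Λ)
    (hψlb : ∀ s : ℝ, ψ s ≥ -Λ)
    (hψ''lb : ∀ s : ℝ, deriv (deriv ψ) s ≥ -Λ)
    (a b : ℝ) (ha : a ≤ 0) (hb : 0 ≤ b)
    (hright : ∀ s, b ≤ s → 0 ≤ deriv ψ s ∧ 0 ≤ deriv (deriv ψ) s)
    (hleft : ∀ s, s ≤ a → deriv ψ s ≤ 0 ∧ 0 ≤ deriv (deriv ψ) s) :
    ∃ (f : ℝ → ℝ) (C : ℝ), ContDiff ℝ 2 f ∧ 0 ≤ C ∧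
      (∀ s ∈ Set.Icc a b, f s = ψ s ∧ deriv f s = deriv ψ s) ∧
      (∀ s, -Λ ≤ f s ∧ f s ≤ ψ s) ∧
      (∀ s, -Λ ≤ deriv (deriv f) s) ∧ (∀ s, |deriv (deriv f) s| ≤ C) := by
  have h2' := hψ
  rw [show (2 : WithTop ℕ∞) = 1 + 1 from rfl, contDiff_succ_iff_deriv] at h2'
  have h1 : Differentiable ℝ ψ := h2'.1
  have h2 : Differentiable ℝ (deriv ψ) := (contDiff_one_iff_deriv.1 h2'.2.2).1
  have hc2 : Continuous (deriv (deriv ψ)) := (contDiff_one_iff_deriv.1 h2'.2.2).2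
  obtain ⟨M, hM⟩ := isCompact_Icc.exists_bound_of_continuousOn
    (hc2.continuousOn (s := Set.Icc a b))
  set d : ℝ := max M 0 with hd
  have hd0 : 0 ≤ d := le_max_right _ _
  set h : ℝ → ℝ := fun t => min (deriv (deriv ψ) t) d with hhdef
  have hhc : Continuous h := hc2.min continuous_const
  set g : ℝ → ℝ := fun s => deriv ψ 0 + ∫ t in (0:ℝ)..s, h t with hgdef
  have hg : ∀ s, HasDerivAt g (h s) s := fun s =>
    HasDerivAt.const_add _ ((hhc.integral_hasStrictDerivAt 0 s).hasDerivAt)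
  have hgdiff : Differentiable ℝ g := fun s => (hg s).differentiableAt
  have hgderiv : deriv g = h := funext fun s => (hg s).deriv
  set f : ℝ → ℝ := fun s => ψ 0 + ∫ t in (0:ℝ)..s, g t with hfdef
  have hf : ∀ s, HasDerivAt f (g s) s := fun s =>
    HasDerivAt.const_add _ ((hgdiff.continuous.integral_hasStrictDerivAt 0 s).hasDerivAt)
  have hfdiff : Differentiable ℝ f := fun s => (hf s).differentiableAt
  have hfderiv : deriv f = g := funext fun s => (hf s).deriv
  have hf2 : deriv (deriv f) = h := by rw [hfderiv, hgderiv]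
  have hfC2 : ContDiff ℝ 2 f := by
    rw [show (2 : WithTop ℕ∞) = 1 + 1 from rfl, contDiff_succ_iff_deriv]
    refine ⟨hfdiff, by simp, ?_⟩
    rw [hfderiv]
    exact contDiff_one_iff_deriv.2 ⟨hgdiff, by rw [hgderiv]; exact hhc⟩
  have hf0 : f 0 = ψ 0 := by simp [hfdef]
  have hg0 : g 0 = deriv ψ 0 := by simp [hgdef]
  -- w1 = deriv ψ - g
  set w1 : ℝ → ℝ := fun s => deriv ψ s - g s with hw1def
  have hw1d : ∀ s, HasDerivAt w1 (deriv (deriv ψ) s - h s) s := fun s =>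
    ((h2 s).hasDerivAt).sub (hg s)
  have hw1diff : Differentiable ℝ w1 := fun s => (hw1d s).differentiableAt
  have hw1deriv : ∀ s, deriv w1 s = deriv (deriv ψ) s - h s := fun s => (hw1d s).deriv
  have hw10 : w1 0 = 0 := by simp [hw1def, hg0]
  have hw1mono : Monotone w1 := monotone_of_deriv_nonneg hw1diff (fun x => by
    rw [hw1deriv]; exact sub_nonneg.2 (min_le_left _ _))
  have hw1sign : ∀ s, (s ≤ 0 → w1 s ≤ 0) ∧ (0 ≤ s → 0 ≤ w1 s) := fun s =>
    ⟨fun hs => hw10 ▸ hw1mono hs, fun hs => hw10 ▸ hw1mono hs⟩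
  -- w = ψ - f
  set w : ℝ → ℝ := fun s => ψ s - f s with hwdef
  have hwd : ∀ s, HasDerivAt w (w1 s) s := fun s => ((h1 s).hasDerivAt).sub (hf s)
  have hwdiff : Differentiable ℝ w := fun s => (hwd s).differentiableAt
  have hwderiv : ∀ s, deriv w s = w1 s := fun s => (hwd s).deriv
  have hw0 : w 0 = 0 := by simp [hwdef, hf0]
  have hwnonneg : ∀ s, 0 ≤ w s := by
    intro s
    rcases le_total s 0 with hs | hs
    · have hanti : AntitoneOn w (Set.Iic 0) :=
        antitoneOn_of_deriv_nonpos (convex_Iic 0) hwdiff.continuous.continuousOn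
          hwdiff.differentiableOn (by
            rw [interior_Iic]; intro x hx
            rw [hwderiv]; exact (hw1sign x).1 (le_of_lt hx))
      have := hanti (Set.mem_Iic.2 hs) (Set.mem_Iic.2 le_rfl) hs
      rwa [hw0] at this
    · have hmono : MonotoneOn w (Set.Ici 0) :=
        monotoneOn_of_deriv_nonneg (convex_Ici 0) hwdiff.continuous.continuousOn
          hwdiff.differentiableOn (by
            rw [interior_Ici]; intro x hx
            rw [hwderiv]; exact (hw1sign x).2 (le_of_lt hx))
      have := hmono (Set.mem_Ici.2 le_rfl) (Set.mem_Ici.2 hs) hs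
      rwa [hw0] at this
  -- on Icc a b, h = ψ''
  have hheq : ∀ s ∈ Set.Icc a b, h s = deriv (deriv ψ) s := by
    intro s hs
    have : deriv (deriv ψ) s ≤ d := le_trans (le_trans (le_abs_self _) (hM s hs)) (le_max_left _ _)
    exact min_eq_left this
  have h0mem : (0:ℝ) ∈ Set.Icc a b := ⟨ha, hb⟩
  -- generic vanishing lemma on Icc a b
  have key : ∀ W : ℝ → ℝ, Differentiable ℝ W → W 0 = 0 →
      (∀ x ∈ Set.Icc a b, deriv W x = 0) → ∀ s ∈ Set.Icc a b, W s = 0 := by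
    intro W hWd hW0 hWz s hs
    have hmono : MonotoneOn W (Set.Icc a b) :=
      monotoneOn_of_deriv_nonneg (convex_Icc a b) hWd.continuous.continuousOn
        hWd.differentiableOn (by
          rw [interior_Icc]; intro x hx
          rw [hWz x (Set.mem_Icc.2 ⟨le_of_lt hx.1, le_of_lt hx.2⟩)])
    have hanti : AntitoneOn W (Set.Icc a b) :=
      antitoneOn_of_deriv_nonpos (convex_Icc a b) hWd.continuous.continuousOn
        hWd.differentiableOn (by
          rw [interior_Icc]; intro x hx
          rw [hWz x (Set.mem_Icc.2 ⟨le_of_lt hx.1, le_of_lt hx.2⟩)])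
    rcases le_total s 0 with hs0 | hs0
    · have h1' := hmono hs h0mem hs0
      have h2'' := hanti hs h0mem hs0
      rw [hW0] at h1' h2''; linarith
    · have h1' := hmono h0mem hs hs0
      have h2'' := hanti h0mem hs hs0
      rw [hW0] at h1' h2''; linarith
  have hw1zero : ∀ s ∈ Set.Icc a b, w1 s = 0 := by
    refine key w1 hw1diff hw10 ?_
    intro x hx; rw [hw1deriv, hheq x hx, sub_self]
  have hwzero : ∀ s ∈ Set.Icc a b, w s = 0 := by
    refine key w hwdiff hw0 ?_
    intro x hx; rw [hwderiv]; exact hw1zero x hx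
  have hfeq : ∀ s ∈ Set.Icc a b, f s = ψ s := fun s hs => by
    have := hwzero s hs; simp only [hwdef] at this; linarith
  have hgeq : ∀ s ∈ Set.Icc a b, g s = deriv ψ s := fun s hs => by
    have := hw1zero s hs; simp only [hw1def] at this; linarith
  -- lower bound on the right
  have hgb : g b = deriv ψ b := hgeq b ⟨le_trans ha hb, le_rfl⟩
  have hga : g a = deriv ψ a := hgeq a ⟨le_rfl, le_trans ha hb⟩
  have hgmonoI : MonotoneOn g (Set.Ici b) :=
    monotoneOn_of_deriv_nonneg (convex_Ici b) hgdiff.continuous.continuousOn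
      hgdiff.differentiableOn (by
        rw [interior_Ici]; intro x hx
        rw [hgderiv]
        exact le_min (hright x (le_of_lt hx)).2 hd0)
  have hgnonnegI : ∀ s, b ≤ s → 0 ≤ g s := by
    intro s hs
    have := hgmonoI (Set.mem_Ici.2 le_rfl) (Set.mem_Ici.2 hs) hs
    rw [hgb] at this
    exact le_trans (hright b le_rfl).1 this
  have hfmonoI : MonotoneOn f (Set.Ici b) :=
    monotoneOn_of_deriv_nonneg (convex_Ici b) hfdiff.continuous.continuousOn
      hfdiff.differentiableOn (by
        rw [interior_Ici]; intro x hx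
        rw [hfderiv]; exact hgnonnegI x (le_of_lt hx))
  have hgmonoII : MonotoneOn g (Set.Iic a) :=
    monotoneOn_of_deriv_nonneg (convex_Iic a) hgdiff.continuous.continuousOn
      hgdiff.differentiableOn (by
        rw [interior_Iic]; intro x hx
        rw [hgderiv]
        exact le_min (hleft x (le_of_lt hx)).2 hd0)
  have hgnonposII : ∀ s, s ≤ a → g s ≤ 0 := by
    intro s hs
    have := hgmonoII (Set.mem_Iic.2 hs) (Set.mem_Iic.2 le_rfl) hs
    rw [hga] at this
    exact le_trans this (hleft a le_rfl).1
  have hfantiII : AntitoneOn f (Set.Iic a) :=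
    antitoneOn_of_deriv_nonpos (convex_Iic a) hfdiff.continuous.continuousOn
      hfdiff.differentiableOn (by
        rw [interior_Iic]; intro x hx
        rw [hfderiv]; exact hgnonposII x (le_of_lt hx))
  have hflb : ∀ s, -Λ ≤ f s := by
    intro s
    rcases le_total s a with hs | hs
    · have := hfantiII (Set.mem_Iic.2 hs) (Set.mem_Iic.2 le_rfl) hs
      have hfa : f a = ψ a := hfeq a ⟨le_rfl, le_trans ha hb⟩
      rw [hfa] at this
      exact le_trans (hψlb a) this
    · rcases le_total s b with hs' | hs'
      · rw [hfeq s ⟨hs, hs'⟩]; exact hψlb s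
      · have := hfmonoI (Set.mem_Ici.2 le_rfl) (Set.mem_Ici.2 hs') hs'
        have hfb : f b = ψ b := hfeq b ⟨le_trans ha hb, le_rfl⟩
        rw [hfb] at this
        exact le_trans (hψlb b) this
  refine ⟨f, max d Λ, hfC2, le_trans hd0 (le_max_left _ _), ?_, ?_, ?_, ?_⟩
  · intro s hs
    exact ⟨hfeq s hs, by rw [hfderiv]; exact hgeq s hs⟩
  · intro s
    refine ⟨hflb s, ?_⟩
    have := hwnonneg s; simp only [hwdef] at this; linarith
  · intro s
    rw [hf2]
    exact le_min (hψ''lb s) (le_trans (neg_nonpos.2 hΛ) hd0)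
  · intro s
    rw [hf2]
    rw [abs_le]
    constructor
    · have : -Λ ≤ min (deriv (deriv ψ) s) d := le_min (hψ''lb s) (le_trans (neg_nonpos.2 hΛ) hd0)
      calc -max d Λ ≤ -Λ := neg_le_neg (le_max_right _ _)
        _ ≤ _ := this
    · exact le_trans (min_le_right _ _) (le_max_left _ _)

theorem stmt_11 (ψ : ℝ → ℝ) (hψ : ContDiff ℝ 2 ψ)
    (Λ : ℝ) (hΛ : 0 ≤ Λ)
    (hψlb : ∀ s : ℝ, ψ s ≥ -Λ)
    (hψ''lb : ∀ s : ℝ, deriv (deriv ψ) s ≥ -Λ)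
    (hψ''top : Filter.Tendsto (deriv (deriv ψ)) Filter.atTop Filter.atTop)
    (hψ''bot : Filter.Tendsto (deriv (deriv ψ)) Filter.atBot Filter.atTop) :
    ∃ (f : ℕ → ℝ → ℝ) (C : ℕ → ℝ),
      (∀ n, ContDiff ℝ 2 (f n)) ∧
      (∀ n, 0 ≤ C n) ∧
      (∀ K : Set ℝ, IsCompact K →
        TendstoUniformlyOn (fun n => f n) ψ Filter.atTop K) ∧
      (∀ K : Set ℝ, IsCompact K →
        TendstoUniformlyOn (fun n => deriv (f n)) (deriv ψ) Filter.atTop K) ∧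
      (∀ n s, -Λ ≤ f n s ∧ f n s ≤ ψ s) ∧
      (∀ n s, deriv (deriv (f n)) s ≥ -Λ) ∧
      (∀ n s, |deriv (deriv (f n)) s| ≤ C n) := by
  have h2' := hψ
  rw [show (2 : WithTop ℕ∞) = 1 + 1 from rfl, contDiff_succ_iff_deriv] at h2'
  have h2 : Differentiable ℝ (deriv ψ) := (contDiff_one_iff_deriv.1 h2'.2.2).1
  -- right side point b₁ with deriv ψ ≥ 0, ψ'' ≥ 0 beyond
  obtain ⟨b₀', hb₀'⟩ := Filter.eventually_atTop.1 (hψ''top.eventually_ge_atTop 1)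
  set b₀ : ℝ := max b₀' 0 with hb₀def
  have hb₀ : ∀ s, b₀ ≤ s → 1 ≤ deriv (deriv ψ) s := fun s hs =>
    hb₀' s (le_trans (le_max_left _ _) hs)
  have hb₀0 : (0:ℝ) ≤ b₀ := le_max_right _ _
  -- φ = deriv ψ - id is monotone on Ici b₀
  have hφ : ∀ s, HasDerivAt (fun t => deriv ψ t - t) (deriv (deriv ψ) s - 1) s := fun s =>
    ((h2 s).hasDerivAt).sub (hasDerivAt_id s)
  have hφdiff : Differentiable ℝ (fun t => deriv ψ t - t) := fun s => (hφ s).differentiableAt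
  have hφmono : MonotoneOn (fun t => deriv ψ t - t) (Set.Ici b₀) :=
    monotoneOn_of_deriv_nonneg (convex_Ici b₀) hφdiff.continuous.continuousOn
      hφdiff.differentiableOn (by
        rw [interior_Ici]; intro x hx
        rw [(hφ x).deriv]
        linarith [hb₀ x (le_of_lt hx)])
  have hψ'mono : MonotoneOn (deriv ψ) (Set.Ici b₀) :=
    monotoneOn_of_deriv_nonneg (convex_Ici b₀) h2.continuous.continuousOn
      h2.differentiableOn (by
        rw [interior_Ici]; intro x hx
        linarith [hb₀ x (le_of_lt hx)])
  set b₁ : ℝ := b₀ + |deriv ψ b₀| with hb₁def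
  have hb₁ge : b₀ ≤ b₁ := le_add_of_nonneg_right (abs_nonneg _)
  have hb₁0 : (0:ℝ) ≤ b₁ := le_trans hb₀0 hb₁ge
  have hψ'b₁ : 0 ≤ deriv ψ b₁ := by
    have := hφmono (Set.mem_Ici.2 le_rfl) (Set.mem_Ici.2 hb₁ge) hb₁ge
    simp only at this
    have hneg := neg_abs_le (deriv ψ b₀)
    rw [hb₁def] at this ⊢
    linarith
  have hright : ∀ s, b₁ ≤ s → 0 ≤ deriv ψ s ∧ 0 ≤ deriv (deriv ψ) s := by
    intro s hs
    refine ⟨?_, by linarith [hb₀ s (le_trans hb₁ge hs)]⟩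
    have := hψ'mono (Set.mem_Ici.2 hb₁ge) (Set.mem_Ici.2 (le_trans hb₁ge hs)) hs
    linarith
  -- left side
  obtain ⟨a₀', ha₀'⟩ := Filter.eventually_atBot.1 (hψ''bot.eventually_ge_atTop 1)
  set a₀ : ℝ := min a₀' 0 with ha₀def
  have ha₀ : ∀ s, s ≤ a₀ → 1 ≤ deriv (deriv ψ) s := fun s hs =>
    ha₀' s (le_trans hs (min_le_left _ _))
  have ha₀0 : a₀ ≤ (0:ℝ) := min_le_right _ _
  have hφmono' : MonotoneOn (fun t => deriv ψ t - t) (Set.Iic a₀) :=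
    monotoneOn_of_deriv_nonneg (convex_Iic a₀) hφdiff.continuous.continuousOn
      hφdiff.differentiableOn (by
        rw [interior_Iic]; intro x hx
        rw [(hφ x).deriv]
        linarith [ha₀ x (le_of_lt hx)])
  have hψ'mono' : MonotoneOn (deriv ψ) (Set.Iic a₀) :=
    monotoneOn_of_deriv_nonneg (convex_Iic a₀) h2.continuous.continuousOn
      h2.differentiableOn (by
        rw [interior_Iic]; intro x hx
        linarith [ha₀ x (le_of_lt hx)])
  set a₁ : ℝ := a₀ - |deriv ψ a₀| with ha₁def
  have ha₁le : a₁ ≤ a₀ := sub_le_self _ (abs_nonneg _)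
  have ha₁0 : a₁ ≤ (0:ℝ) := le_trans ha₁le ha₀0
  have hψ'a₁ : deriv ψ a₁ ≤ 0 := by
    have := hφmono' (Set.mem_Iic.2 ha₁le) (Set.mem_Iic.2 le_rfl) ha₁le
    simp only at this
    have hle := le_abs_self (deriv ψ a₀)
    rw [ha₁def] at this ⊢
    linarith
  have hleft : ∀ s, s ≤ a₁ → deriv ψ s ≤ 0 ∧ 0 ≤ deriv (deriv ψ) s := by
    intro s hs
    refine ⟨?_, by linarith [ha₀ s (le_trans hs ha₁le)]⟩
    have := hψ'mono' (Set.mem_Iic.2 (le_trans hs ha₁le)) (Set.mem_Iic.2 ha₁le) hs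
    linarith
  -- per-n construction
  have H : ∀ n : ℕ, ∃ fC : (ℝ → ℝ) × ℝ, ContDiff ℝ 2 fC.1 ∧ 0 ≤ fC.2 ∧
      (∀ s ∈ Set.Icc (min a₁ (-(n:ℝ))) (max b₁ (n:ℝ)),
        fC.1 s = ψ s ∧ deriv fC.1 s = deriv ψ s) ∧
      (∀ s, -Λ ≤ fC.1 s ∧ fC.1 s ≤ ψ s) ∧
      (∀ s, -Λ ≤ deriv (deriv fC.1) s) ∧ (∀ s, |deriv (deriv fC.1) s| ≤ fC.2) := by
    intro n
    obtain ⟨f, C, h1, h2'', h3, h4, h5, h6⟩ := build_aux ψ hψ Λ hΛ hψlb hψ''lb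
      (min a₁ (-(n:ℝ))) (max b₁ (n:ℝ))
      (le_trans (min_le_left _ _) ha₁0) (le_trans hb₁0 (le_max_left _ _))
      (fun s hs => hright s (le_trans (le_max_left _ _) hs))
      (fun s hs => hleft s (le_trans hs (min_le_left _ _)))
    exact ⟨(f, C), h1, h2'', h3, h4, h5, h6⟩
  choose fC hC2 hCnn heq hbds hlb2 hub2 using H
  have heventual : ∀ K : Set ℝ, IsCompact K →
      ∀ ε : ℝ, 0 < ε → ∀ᶠ n in Filter.atTop,
        ∀ x ∈ K, (fC n).1 x = ψ x ∧ deriv (fC n).1 x = deriv ψ x := by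
    intro K hK ε hε
    obtain ⟨r, hr⟩ := hK.isBounded.subset_closedBall 0
    filter_upwards [Filter.eventually_ge_atTop ⌈r⌉₊] with n hn x hx
    have hxr : |x| ≤ r := by
      have := hr hx
      rwa [Metric.mem_closedBall, Real.dist_eq, sub_zero] at this
    have hrn : r ≤ (n:ℝ) := le_trans (Nat.le_ceil r) (Nat.cast_le.2 hn)
    refine heq n x ⟨?_, ?_⟩
    · have : -(n:ℝ) ≤ x := by
        have := neg_abs_le x; linarith
      exact le_trans (min_le_right _ _) this
    · have : x ≤ (n:ℝ) := le_trans (le_abs_self x) (le_trans hxr hrn)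
      exact le_trans this (le_max_right _ _)
  refine ⟨fun n => (fC n).1, fun n => (fC n).2, hC2, hCnn, ?_, ?_, hbds, hlb2, hub2⟩
  · intro K hK
    rw [Metric.tendstoUniformlyOn_iff]
    intro ε hε
    filter_upwards [heventual K hK ε hε] with n hn x hx
    rw [(hn x hx).1, dist_self]
    exact hε
  · intro K hK
    rw [Metric.tendstoUniformlyOn_iff]
    intro ε hε
    filter_upwards [heventual K hK ε hε] with n hn x hx
    rw [(hn x hx).2, dist_self]
    exact hε
end

section
/- Let A : ℝ^d → ℝ be continuously differentiable with gradient A' satisfying |A'(p)| ≤ C̄_A·|p| for all p, let (X, μ) be a measure space, and let w, v : X → ℝ^d be measurable with ∫ |w|² dμ < ∞ and ∫ |v|² dμ < ∞. Then lim_{δ → 0⁺} (1/δ)·∫_X (A(w(x) + δ·v(x)) − A(w(x))) dμ(x) = ∫_X A'(w(x))·v(x) dμ(x). -/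
open MeasureTheory RealInnerProductSpace

theorem stmt_13 (d : ℕ) (hd : 1 ≤ d)
    (A : EuclideanSpace ℝ (Fin d) → ℝ) (hA : ContDiff ℝ 1 A)
    (CbarA : ℝ) (hCbarA : 0 < CbarA)
    (hgrowth : ∀ p : EuclideanSpace ℝ (Fin d), ‖gradient A p‖ ≤ CbarA * ‖p‖)
    {X : Type*} [MeasurableSpace X] (μ : Measure X)
    (w v : X → EuclideanSpace ℝ (Fin d))
    (hw : Measurable w) (hv : Measurable v)
    (hw2 : Integrable (fun x => ‖w x‖ ^ 2) μ)
    (hv2 : Integrable (fun x => ‖v x‖ ^ 2) μ) :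
    Filter.Tendsto
      (fun δ : ℝ => (1 / δ) * ∫ x, (A (w x + δ • v x) - A (w x)) ∂μ)
      (nhdsWithin 0 (Set.Ioi 0))
      (nhds (∫ x, ⟪gradient A (w x), v x⟫ ∂μ)) := by
  have hdA : Differentiable ℝ A := hA.differentiable one_ne_zero
  set F : ℝ → X → ℝ := fun δ x => A (w x + δ • v x) - A (w x) with hFdef
  set F' : ℝ → X → ℝ := fun δ x => ⟪gradient A (w x + δ • v x), v x⟫ with hF'def
  have hgradcont : Continuous (gradient A) := by
    have h1 : Continuous (fderiv ℝ A) := hA.continuous_fderiv one_ne_zero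
    exact ((InnerProductSpace.toDual ℝ _).symm.continuous.comp h1 : _)
  have hFmeas : ∀ δ : ℝ, AEStronglyMeasurable (F δ) μ := fun δ =>
    (((hA.continuous.measurable.comp (hw.add (hv.const_smul δ))).sub
      (hA.continuous.measurable.comp hw)).aestronglyMeasurable)
  have hF'meas : AEStronglyMeasurable (F' 0) μ := by
    apply Measurable.aestronglyMeasurable
    exact (hgradcont.measurable.comp (hw.add (hv.const_smul (0:ℝ)))).inner hv
  set bound : X → ℝ := fun x => CbarA * ((‖w x‖ + ‖v x‖) * ‖v x‖) with hbdef
  have h_bound : ∀ᵐ x ∂μ, ∀ δ ∈ Metric.ball (0:ℝ) 1, ‖F' δ x‖ ≤ bound x := by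
    refine Filter.Eventually.of_forall fun x δ hδ => ?_
    have h1 : ‖F' δ x‖ ≤ ‖gradient A (w x + δ • v x)‖ * ‖v x‖ := norm_inner_le_norm _ _
    have hδ1 : |δ| ≤ 1 := le_of_lt (by simpa [Real.dist_eq] using hδ)
    have h3 : ‖w x + δ • v x‖ ≤ ‖w x‖ + ‖v x‖ := by
      refine (norm_add_le _ _).trans ?_
      have : ‖δ • v x‖ ≤ ‖v x‖ := by
        rw [norm_smul, Real.norm_eq_abs]
        calc |δ| * ‖v x‖ ≤ 1 * ‖v x‖ := by gcongr
          _ = ‖v x‖ := one_mul _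
      linarith
    have h2 : ‖gradient A (w x + δ • v x)‖ ≤ CbarA * (‖w x‖ + ‖v x‖) := by
      refine (hgrowth _).trans ?_
      gcongr
    calc ‖F' δ x‖ ≤ ‖gradient A (w x + δ • v x)‖ * ‖v x‖ := h1
      _ ≤ (CbarA * (‖w x‖ + ‖v x‖)) * ‖v x‖ := by gcongr
      _ = bound x := by ring
  have hb_int : Integrable bound μ := by
    have hmeas : Measurable bound :=
      (measurable_const.mul ((hw.norm.add hv.norm).mul hv.norm))
    refine Integrable.mono' (((hw2.add hv2).add hv2).const_mul CbarA)
      hmeas.aestronglyMeasurable (Filter.Eventually.of_forall fun x => ?_)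
    have h0 : (0:ℝ) ≤ bound x := by positivity
    rw [Real.norm_of_nonneg h0]
    simp only [Pi.add_apply, hbdef]
    have := norm_nonneg (w x); have := norm_nonneg (v x)
    nlinarith [sq_nonneg (‖w x‖ - ‖v x‖)]
  have h_diff : ∀ᵐ x ∂μ, ∀ δ ∈ Metric.ball (0:ℝ) 1,
      HasDerivAt (fun t => F t x) (F' δ x) δ := by
    refine Filter.Eventually.of_forall fun x δ _ => ?_
    have hc : HasDerivAt (fun t : ℝ => w x + t • v x) (v x) δ := by
      simpa using ((hasDerivAt_id δ).smul_const (v x)).const_add (w x)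
    have hAd : HasFDerivAt A
        (InnerProductSpace.toDual ℝ _ (gradient A (w x + δ • v x))) (w x + δ • v x) :=
      hasGradientAt_iff_hasFDerivAt.mp (hdA _).hasGradientAt
    have := (hAd.comp_hasDerivAt δ hc).sub_const (A (w x))
    simpa [hFdef, hF'def, InnerProductSpace.toDual_apply_apply] using this
  have hF0_int : Integrable (F 0) μ :=
    (integrable_zero _ _ _).congr (Filter.Eventually.of_forall fun x => by simp [hFdef])
  obtain ⟨-, hderiv⟩ := hasDerivAt_integral_of_dominated_loc_of_deriv_le (μ := μ)
    (F := F) (F' := F') (Metric.ball_mem_nhds 0 one_pos) (Filter.Eventually.of_forall hFmeas) hF0_int hF'meas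
    h_bound hb_int h_diff
  have h0 : (∫ x, F 0 x ∂μ) = 0 := by simp [hFdef]
  have hF'0 : (∫ x, F' 0 x ∂μ) = ∫ x, ⟪gradient A (w x), v x⟫ ∂μ := by simp [hF'def]
  rw [hasDerivAt_iff_tendsto_slope] at hderiv
  rw [← hF'0]
  refine (hderiv.mono_left (nhdsWithin_mono _ fun δ hδ => ?_)).congr fun δ => ?_
  · exact ne_of_gt hδ
  · rw [slope_def_field, h0]
    ring
end

section
/- Let f : ℝ → ℝ be continuously differentiable with |f'(s)| ≤ C·(1 + |s|) for all s ∈ ℝ for some C > 0, let (X, μ) be a finite measure space, and let w, v : X → ℝ be measurable with ∫ w² dμ < ∞ and ∫ v² dμ < ∞. Then lim_{δ → 0⁺} (1/δ)·∫_X (f(w(x) + δ·v(x)) − f(w(x))) dμ(x) = ∫_X f'(w(x))·v(x) dμ(x). -/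
open MeasureTheory

theorem stmt_15 (f : ℝ → ℝ) (hf : ContDiff ℝ 1 f)
    (C : ℝ) (hC : 0 < C)
    (hgrowth : ∀ s : ℝ, |deriv f s| ≤ C * (1 + |s|))
    {X : Type*} [MeasurableSpace X] (μ : Measure X) [IsFiniteMeasure μ]
    (w v : X → ℝ)
    (hw : Measurable w) (hv : Measurable v)
    (hw2 : Integrable (fun x => (w x) ^ 2) μ)
    (hv2 : Integrable (fun x => (v x) ^ 2) μ) :
    Filter.Tendsto
      (fun δ : ℝ => (1 / δ) * ∫ x, (f (w x + δ * v x) - f (w x)) ∂μ)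
      (nhdsWithin 0 (Set.Ioi 0))
      (nhds (∫ x, deriv f (w x) * v x ∂μ)) := by
  have hfd : Differentiable ℝ f := hf.differentiable one_ne_zero
  -- integrability of the bound
  have hvabs : Integrable (fun x => |v x|) μ := by
    refine ((integrable_const (1:ℝ)).add hv2).mono
      (hv.abs.aestronglyMeasurable) (Filter.Eventually.of_forall fun x => ?_)
    have h1 : |v x| ≤ 1 + v x ^ 2 := by nlinarith [abs_nonneg (v x), sq_abs (v x)]
    have h2 : (0:ℝ) ≤ 1 + v x ^ 2 := by positivity
    simp only [Pi.add_apply, Real.norm_eq_abs, abs_abs, abs_of_nonneg h2]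
    exact h1
  have hwv : Integrable (fun x => |w x| * |v x|) μ := by
    refine (hw2.add hv2).mono ((hw.abs.mul hv.abs).aestronglyMeasurable)
      (Filter.Eventually.of_forall fun x => ?_)
    have h1 : |w x| * |v x| ≤ w x ^ 2 + v x ^ 2 := by
      nlinarith [sq_abs (w x), sq_abs (v x), sq_nonneg (|w x| - |v x|),
        abs_nonneg (w x), abs_nonneg (v x)]
    have h2 : (0:ℝ) ≤ w x ^ 2 + v x ^ 2 := by positivity
    simp only [Pi.add_apply, Real.norm_eq_abs, abs_of_nonneg h2,
      abs_of_nonneg (mul_nonneg (abs_nonneg (w x)) (abs_nonneg (v x)))]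
    exact h1
  have hbound : Integrable (fun x => C * (|v x| + |w x| * |v x| + v x ^ 2)) μ :=
    ((hvabs.add hwv).add hv2).const_mul C
  have key : Filter.Tendsto
      (fun δ : ℝ => ∫ x, (1 / δ) * (f (w x + δ * v x) - f (w x)) ∂μ)
      (nhdsWithin 0 (Set.Ioi 0))
      (nhds (∫ x, deriv f (w x) * v x ∂μ)) := by
    apply tendsto_integral_filter_of_dominated_convergence
      (fun x => C * (|v x| + |w x| * |v x| + v x ^ 2)) _ _ hbound
    · -- pointwise limit
      refine Filter.Eventually.of_forall fun x => ?_
      have hinner : HasDerivAt (fun δ : ℝ => w x + δ * v x) (v x) 0 := by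
        simpa using ((hasDerivAt_id (0:ℝ)).mul_const (v x)).const_add (w x)
      have houter : HasDerivAt f (deriv f (w x + 0 * v x)) (w x + 0 * v x) :=
        (hfd (w x + 0 * v x)).hasDerivAt
      have hcomp : HasDerivAt (fun δ : ℝ => f (w x + δ * v x))
          (deriv f (w x) * v x) 0 := by
        simpa [Function.comp_def] using HasDerivAt.comp 0 houter hinner
      rw [hasDerivAt_iff_tendsto_slope] at hcomp
      have hmono : nhdsWithin (0:ℝ) (Set.Ioi 0) ≤ nhdsWithin 0 {(0:ℝ)}ᶜ :=
        nhdsWithin_mono 0 (fun y hy => ne_of_gt hy)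
      refine (hcomp.mono_left hmono).congr fun δ => ?_
      simp [slope_def_field]
      ring
    · -- measurability
      refine Filter.Eventually.of_forall fun δ => ?_
      exact (((hf.continuous.measurable.comp
        (hw.add (hv.const_mul δ))).sub
        (hf.continuous.measurable.comp hw)).const_mul (1/δ)).aestronglyMeasurable
    · -- bound
      have hev : ∀ᶠ δ : ℝ in nhdsWithin 0 (Set.Ioi 0), δ ∈ Set.Ioo (0:ℝ) 1 := by
        apply Filter.eventually_iff_exists_mem.mpr
        refine ⟨Set.Ioo 0 1, ?_, fun y hy => hy⟩
        exact mem_nhdsWithin.mpr ⟨Set.Iio 1, isOpen_Iio, by norm_num, fun y hy =>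
          ⟨hy.2, hy.1⟩⟩
      filter_upwards [hev] with δ hδ
      refine Filter.Eventually.of_forall fun x => ?_
      obtain ⟨hδ0, hδ1⟩ := hδ
      set a := w x with ha
      set b := w x + δ * v x with hb
      have hK : ∀ s ∈ Set.uIcc a b, ‖deriv f s‖ ≤ C * (1 + |a| + |v x|) := by
        intro s hs
        rw [Set.mem_uIcc] at hs
        have hsabs : |s| ≤ |a| + |v x| := by
          have hmax : |s| ≤ max |a| |b| := by
            rcases hs with ⟨h1, h2⟩ | ⟨h1, h2⟩
            · exact abs_le_max_abs_abs h1 h2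
            · exact (abs_le_max_abs_abs h1 h2).trans (by rw [max_comm])
          have hbabs : |b| ≤ |a| + |v x| := by
            calc |b| ≤ |a| + |δ * v x| := abs_add_le _ _
              _ = |a| + δ * |v x| := by rw [abs_mul, abs_of_pos hδ0]
              _ ≤ |a| + 1 * |v x| := by gcongr
              _ = |a| + |v x| := by ring
          exact hmax.trans (max_le (le_add_of_nonneg_right (abs_nonneg _)) hbabs)
        calc ‖deriv f s‖ = |deriv f s| := rfl
          _ ≤ C * (1 + |s|) := hgrowth s
          _ ≤ C * (1 + (|a| + |v x|)) := by gcongr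
          _ = C * (1 + |a| + |v x|) := by ring
      have hmvt : ‖f b - f a‖ ≤ C * (1 + |a| + |v x|) * ‖b - a‖ := by
        apply (convex_uIcc a b).norm_image_sub_le_of_norm_deriv_le
          (fun s _ => hfd s) hK Set.left_mem_uIcc Set.right_mem_uIcc
      have hba : ‖b - a‖ = δ * |v x| := by
        simp [hb, ha, abs_mul, abs_of_pos hδ0]
      rw [hba] at hmvt
      have : ‖(1 / δ) * (f b - f a)‖ = (1/δ) * ‖f b - f a‖ := by
        rw [norm_mul, Real.norm_eq_abs, abs_of_pos (by positivity : (0:ℝ) < 1/δ)]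
      rw [this]
      calc (1/δ) * ‖f b - f a‖ ≤ (1/δ) * (C * (1 + |a| + |v x|) * (δ * |v x|)) := by
            gcongr
        _ = C * (1 + |a| + |v x|) * |v x| := by
            field_simp
        _ = C * (|v x| + |a| * |v x| + |v x| ^ 2) := by ring
        _ = C * (|v x| + |w x| * |v x| + v x ^ 2) := by rw [sq_abs, ha]
  refine key.congr fun δ => ?_
  exact integral_const_mul _ _
end
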